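/- For every n ≥ 6 and every r, every group homomorphism f : K_n →* S_r takes values in the alternating group: for every x ∈ K_n, the sign of the permutation f(x) is 1. In other words, Hom(K_n, S_r) = Hom(K_n, A_r). -/

import Mathlib

section helpers

lemma braid_conj {H : Type*} [Group H] {a b : H} (hab : a*b*a = b*a*b) :
    a⁻¹*b⁻¹*a = b*(a⁻¹*b⁻¹) := by
  have h := congrArg (·⁻¹) hab
  simp only [mul_inv_rev] at h
  have h2 := congrArg (fun x => b * x * a) h
  simp only [mul_assoc, inv_mul_cancel_left, mul_inv_cancel_left, inv_mul_cancel,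
    mul_inv_cancel, one_mul, mul_one] at h2 ⊢
  exact h2.symm

lemma eq_of_braid {H : Type*} [Group H] {a b c : H}
    (hac : a*c = c*a) (hab : a*b*a = b*a*b) (hbc : b*c*b = c*b*c)
    (hx : (a*c⁻¹)*(c*b⁻¹) = (c*b⁻¹)*(a*c⁻¹)) : a = c := by
  have e1 := hx
  simp only [mul_assoc, inv_mul_cancel_left, mul_inv_cancel_left, inv_mul_cancel,
    mul_inv_cancel, one_mul, mul_one] at e1
  have h3 := congrArg (fun x => c⁻¹ * x * c) e1
  simp only [mul_assoc, inv_mul_cancel_left, mul_inv_cancel_left, inv_mul_cancel,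
    mul_inv_cancel, one_mul, mul_one] at h3
  have hca : c⁻¹ * a = a * c⁻¹ := by
    have h := congrArg (fun x => c⁻¹ * x * c⁻¹) hac
    simp only [mul_assoc, inv_mul_cancel_left, mul_inv_cancel_left, inv_mul_cancel,
      mul_inv_cancel, one_mul, mul_one] at h
    exact h
  have hca' : ∀ x : H, c⁻¹ * (a * x) = a * (c⁻¹ * x) := fun x => by
    rw [← mul_assoc, hca, mul_assoc]
  rw [hca'] at h3
  have e2 : c⁻¹ * (b⁻¹ * c) = a⁻¹ * (b⁻¹ * a) := by
    have := congrArg (fun x => a⁻¹ * x) h3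
    simp only [mul_assoc, inv_mul_cancel_left, mul_inv_cancel_left] at this
    exact this
  have h4 := braid_conj hab
  have h5 := braid_conj (a := c) (b := b) hbc.symm
  simp only [mul_assoc] at h4 h5
  have : b * (c⁻¹ * b⁻¹) = b * (a⁻¹ * b⁻¹) := by rw [← h4, ← h5]; exact e2
  have h6 := mul_left_cancel this
  have h7 : (c⁻¹ : H) = a⁻¹ := mul_right_cancel h6
  exact (inv_injective h7).symm

lemma comm_of_closure {H : Type*} [Group H] {s : Set H} (hs : Subgroup.closure s = ⊤)
    (hc : ∀ a ∈ s, ∀ b ∈ s, Commute a b) (x y : H) : Commute x y := by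
  have hx : x ∈ Subgroup.closure s := hs ▸ Subgroup.mem_top x
  have hy : y ∈ Subgroup.closure s := hs ▸ Subgroup.mem_top y
  refine Subgroup.closure_induction (p := fun x _ => Commute x y) ?_ ?_ ?_ ?_ hx
  · intro a ha
    refine Subgroup.closure_induction (p := fun z _ => Commute a z) ?_ ?_ ?_ ?_ hy
    · exact fun b hb => hc a ha b hb
    · exact Commute.one_right a
    · exact fun u v _ _ h1 h2 => h1.mul_right h2
    · exact fun u _ h1 => h1.inv_right
  · exact Commute.one_left y
  · exact fun u v _ _ h1 h2 => h1.mul_left h2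
  · exact fun u _ h1 => h1.inv_left

end helpers

def braidRels (n : ℕ) : Set (FreeGroup (Fin (n - 1))) :=
  {r | (∃ i j : Fin (n - 1), 2 ≤ |(i : ℤ) - (j : ℤ)| ∧
        r = FreeGroup.of i * FreeGroup.of j * (FreeGroup.of i)⁻¹ * (FreeGroup.of j)⁻¹) ∨
       (∃ i j : Fin (n - 1), |(i : ℤ) - (j : ℤ)| = 1 ∧
        r = FreeGroup.of i * FreeGroup.of j * FreeGroup.of i *
            (FreeGroup.of j)⁻¹ * (FreeGroup.of i)⁻¹ * (FreeGroup.of j)⁻¹)}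

/-- The braid group `B n` on `n` strands, presented with generators `σ_1, …, σ_{n-1}`. -/
abbrev BraidGroup (n : ℕ) : Type := PresentedGroup (braidRels n)

/-- The generator `σ_{i+1}` of the braid group. -/
def braidGen {n : ℕ} (i : Fin (n - 1)) : BraidGroup n := PresentedGroup.of i

lemma braid_rel_one {n : ℕ} {r : FreeGroup (Fin (n-1))} (hr : r ∈ braidRels n) :
    (QuotientGroup.mk r : BraidGroup n) = 1 :=
  (QuotientGroup.eq_one_iff r).mpr (Subgroup.subset_normalClosure hr)

lemma braidGen_eq_mk {n : ℕ} (i : Fin (n-1)) :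
    braidGen i = (QuotientGroup.mk (FreeGroup.of i) : BraidGroup n) := rfl

lemma braid_comm {n : ℕ} {i j : Fin (n-1)} (h : 2 ≤ |(i : ℤ) - (j : ℤ)|) :
    braidGen (n := n) i * braidGen j = braidGen j * braidGen i := by
  have h1 : (QuotientGroup.mk (FreeGroup.of i * FreeGroup.of j * (FreeGroup.of i)⁻¹ *
      (FreeGroup.of j)⁻¹) : BraidGroup n) = 1 := braid_rel_one (Or.inl ⟨i, j, h, rfl⟩)
  simp only [QuotientGroup.mk_mul, QuotientGroup.mk_inv] at h1
  rw [braidGen_eq_mk, braidGen_eq_mk]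
  set x := (QuotientGroup.mk (FreeGroup.of i) : BraidGroup n)
  set y := (QuotientGroup.mk (FreeGroup.of j) : BraidGroup n)
  have := congrArg (fun z => z * y * x) h1
  simp only [mul_assoc, inv_mul_cancel_left, mul_inv_cancel_left, inv_mul_cancel,
    mul_inv_cancel, one_mul, mul_one] at this ⊢
  exact this

lemma braid_braid {n : ℕ} {i j : Fin (n-1)} (h : |(i : ℤ) - (j : ℤ)| = 1) :
    braidGen (n := n) i * braidGen j * braidGen i
      = braidGen j * braidGen i * braidGen j := by
  have h1 : (QuotientGroup.mk (FreeGroup.of i * FreeGroup.of j * FreeGroup.of i *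
      (FreeGroup.of j)⁻¹ * (FreeGroup.of i)⁻¹ * (FreeGroup.of j)⁻¹) : BraidGroup n) = 1 :=
    braid_rel_one (Or.inr ⟨i, j, h, rfl⟩)
  simp only [QuotientGroup.mk_mul, QuotientGroup.mk_inv] at h1
  rw [braidGen_eq_mk, braidGen_eq_mk]
  set x := (QuotientGroup.mk (FreeGroup.of i) : BraidGroup n)
  set y := (QuotientGroup.mk (FreeGroup.of j) : BraidGroup n)
  have := congrArg (fun z => z * y * x * y) h1
  simp only [mul_assoc, inv_mul_cancel_left, mul_inv_cancel_left, inv_mul_cancel,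
    mul_inv_cancel, one_mul, mul_one] at this ⊢
  exact this

lemma ab_adj {n : ℕ} {i j : Fin (n-1)} (h : |(i : ℤ) - (j : ℤ)| = 1) :
    Abelianization.of (braidGen (n := n) i) = Abelianization.of (braidGen j) := by
  have hb := congrArg Abelianization.of (braid_braid h)
  simp only [map_mul] at hb
  set x := Abelianization.of (braidGen (n := n) i)
  set y := Abelianization.of (braidGen (n := n) j)
  have h1 : x * x * y = x * y * y := by
    calc x * x * y = x * y * x := by conv_lhs => rw [mul_assoc, mul_comm x y, ← mul_assoc]
    _ = y * x * y := hb
    _ = x * y * y := by conv_lhs => rw [mul_comm y x]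
  rw [mul_assoc, mul_assoc] at h1
  exact mul_right_cancel (mul_left_cancel h1)

lemma mem_commutator_iff {n : ℕ} (x : BraidGroup n) :
    x ∈ commutator (BraidGroup n) ↔ Abelianization.of x = 1 :=
  (QuotientGroup.eq_one_iff x).symm

open scoped commutatorElement in
lemma braid_commutator_perfect {n : ℕ} (hn : 6 ≤ n) :
    ⁅commutator (BraidGroup n), commutator (BraidGroup n)⁆ = commutator (BraidGroup n) := by
  set K := commutator (BraidGroup n) with hK
  haveI : (⁅K, K⁆ : Subgroup (BraidGroup n)).Normal := inferInstance
  refine le_antisymm (Subgroup.commutator_le.mpr fun a ha b hb => by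
    rw [commutatorElement_def]
    exact K.mul_mem (K.mul_mem (K.mul_mem ha hb) (K.inv_mem ha)) (K.inv_mem hb)) ?_
  set π := QuotientGroup.mk' (⁅K, K⁆ : Subgroup (BraidGroup n)) with hπ
  have hker : ∀ x ∈ (⁅K, K⁆ : Subgroup (BraidGroup n)), π x = 1 := fun x hx =>
    (QuotientGroup.eq_one_iff x).mpr hx
  have hKc : ∀ x y : BraidGroup n, x ∈ K → y ∈ K → π x * π y = π y * π x := by
    intro x y hx hy
    have h1 : π ⁅x, y⁆ = 1 := hker _ (Subgroup.commutator_mem_commutator hx hy)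
    rw [map_commutatorElement] at h1
    exact commutatorElement_eq_one_iff_commute.mp h1
  set g : Fin (n-1) → _ := fun i => π (braidGen i) with hg
  have hcomm : ∀ i j : Fin (n-1), 2 ≤ |(i:ℤ) - (j:ℤ)| → g i * g j = g j * g i := by
    intro i j h
    simp only [hg, ← map_mul]
    rw [braid_comm h]
  have hbr : ∀ i j : Fin (n-1), |(i:ℤ) - (j:ℤ)| = 1 → g i * g j * g i = g j * g i * g j := by
    intro i j h
    simp only [hg, ← map_mul]
    rw [braid_braid h]
  have hmem : ∀ i j : Fin (n-1),
      Abelianization.of (braidGen (n := n) i) = Abelianization.of (braidGen j) →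
      braidGen (n := n) i * (braidGen j)⁻¹ ∈ K := by
    intro i j h
    refine (mem_commutator_iff _).mpr ?_
    rw [map_mul, map_inv, h, mul_inv_cancel]
  -- integer-abs facts for explicit indices
  have habs : ∀ (a b : ℕ) (ha : a < n-1) (hb : b < n-1),
      |((⟨a,ha⟩ : Fin (n-1)) : ℤ) - ((⟨b,hb⟩ : Fin (n-1)) : ℤ)| = |((a:ℤ) - (b:ℤ))| := fun _ _ _ _ => rfl
  have habs' : ∀ (a b : ℕ), a ≤ b → |((a:ℤ) - (b:ℤ))| = ((b - a : ℕ) : ℤ) := by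
    intro a b hab
    rw [abs_sub_comm, abs_of_nonneg (by omega)]
    omega
  -- the key step : g ⟨k⟩ = g ⟨k+2⟩
  have hstep : ∀ (k : ℕ) (hk : k + 2 < n - 1), g ⟨k, by omega⟩ = g ⟨k+2, hk⟩ := by
    intro k hk
    have h0 : k < n - 1 := by omega
    have h1 : k + 1 < n - 1 := by omega
    have d01 : |((⟨k, h0⟩ : Fin (n-1)) : ℤ) - ((⟨k+1, h1⟩ : Fin (n-1)) : ℤ)| = 1 := by
      rw [habs, habs' k (k+1) (by omega)]; omega
    have d12 : |((⟨k+1, h1⟩ : Fin (n-1)) : ℤ) - ((⟨k+2, hk⟩ : Fin (n-1)) : ℤ)| = 1 := by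
      rw [habs, habs' (k+1) (k+2) (by omega)]; omega
    have d02 : 2 ≤ |((⟨k, h0⟩ : Fin (n-1)) : ℤ) - ((⟨k+2, hk⟩ : Fin (n-1)) : ℤ)| := by
      rw [habs, habs' k (k+2) (by omega)]; omega
    refine eq_of_braid (b := g ⟨k+1, h1⟩) (hcomm _ _ d02) (hbr _ _ d01) (hbr _ _ d12) ?_
    have m1 : braidGen (n := n) ⟨k, h0⟩ * (braidGen ⟨k+2, hk⟩)⁻¹ ∈ K := by
      refine hmem _ _ ?_
      rw [ab_adj d01, ab_adj d12]
    have m2 : braidGen (n := n) ⟨k+2, hk⟩ * (braidGen ⟨k+1, h1⟩)⁻¹ ∈ K := by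
      refine hmem _ _ ?_
      rw [← ab_adj d12]
    have := hKc _ _ m1 m2
    simp only [map_mul, map_inv] at this
    exact this
  -- adjacent generators commute in the quotient
  have hadj : ∀ (k : ℕ) (hk1 : k + 1 < n - 1),
      g ⟨k, by omega⟩ * g ⟨k+1, hk1⟩ = g ⟨k+1, hk1⟩ * g ⟨k, by omega⟩ := by
    intro k hk1
    by_cases hbig : k + 3 < n - 1
    · have e : g ⟨k+1, hk1⟩ = g ⟨k+3, hbig⟩ := by
        have := hstep (k+1) (by omega)
        convert this using 3
      rw [e]
      exact hcomm _ _ (by rw [habs, habs' k (k+3) (by omega)]; omega)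
    · have hk2 : 2 ≤ k := by omega
      have hkm : k - 2 + 2 < n - 1 := by omega
      have e : g ⟨k - 2, by omega⟩ = g ⟨k, by omega⟩ := by
        have := hstep (k-2) hkm
        convert this using 3; omega
      rw [← e]
      exact hcomm _ _ (by rw [habs, habs' (k-2) (k+1) (by omega)]; omega)
  -- all generators commute
  have hall : ∀ i j : Fin (n-1), Commute (g i) (g j) := by
    have key : ∀ i j : Fin (n-1), (i:ℕ) ≤ (j:ℕ) → Commute (g i) (g j) := by
      intro i j hij
      rcases Nat.lt_or_ge ((i:ℕ)+1) (j:ℕ) with h2 | h2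
      · -- distance ≥ 2
        exact hcomm i j (by
          have hi : (i : ℤ) = ((i:ℕ):ℤ) := rfl
          have hj : (j : ℤ) = ((j:ℕ):ℤ) := rfl
          rw [hi, hj, habs' _ _ (by omega)]; omega)
      · rcases Nat.lt_or_ge (i:ℕ) (j:ℕ) with h1 | h1
        · -- j = i + 1
          have hj : j = ⟨(i:ℕ)+1, by omega⟩ := by
            apply Fin.ext; simp; omega
          rw [hj]
          exact hadj (i:ℕ) (by omega)
        · -- i = j
          have : i = j := Fin.ext (by omega)
          rw [this]
    intro i j
    rcases Nat.le_total (i:ℕ) (j:ℕ) with h | h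
    · exact key i j h
    · exact (key j i h).symm
  -- the quotient is commutative
  have hgen : Subgroup.closure (Set.range g) = ⊤ := by
    have h2 := MonoidHom.map_closure π (Set.range (PresentedGroup.of : Fin (n-1) → BraidGroup n))
    rw [PresentedGroup.closure_range_of,
      Subgroup.map_top_of_surjective π (QuotientGroup.mk'_surjective _)] at h2
    have h3 : Set.range g = ⇑π '' Set.range (PresentedGroup.of : Fin (n-1) → BraidGroup n) := by
      rw [← Set.range_comp]; rfl
    rw [h3, ← h2]
  have hcommQ : ∀ x y, Commute x y := comm_of_closure hgen (by
    rintro a ⟨i, rfl⟩ b ⟨j, rfl⟩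
    exact hall i j)
  refine le_trans (commutator_def (BraidGroup n)).le ?_
  refine Subgroup.commutator_le.mpr fun x _ y _ => ?_
  have : π ⁅x, y⁆ = 1 := by
    rw [map_commutatorElement]
    exact commutatorElement_eq_one_iff_commute.mpr (hcommQ _ _)
  rw [hπ] at this
  rwa [← QuotientGroup.ker_mk' (⁅K, K⁆ : Subgroup (BraidGroup n)), MonoidHom.mem_ker]

theorem hom_Kn_symm_values_in_alternating (n r : ℕ) (hn : 6 ≤ n)
    (f : ↥(commutator (BraidGroup n)) →* Equiv.Perm (Fin r)) :
    ∀ x, Equiv.Perm.sign (f x) = 1 := by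
  intro x
  have hx : (x : BraidGroup n) ∈
      (⁅commutator (BraidGroup n), commutator (BraidGroup n)⁆ : Subgroup (BraidGroup n)) := by
    rw [braid_commutator_perfect hn]
    exact x.2
  have hmap : Subgroup.map (commutator (BraidGroup n)).subtype
      (commutator ↥(commutator (BraidGroup n)))
      = (⁅commutator (BraidGroup n), commutator (BraidGroup n)⁆ : Subgroup (BraidGroup n)) := by
    rw [commutator_def ↥(commutator (BraidGroup n)), Subgroup.map_commutator,
      ← MonoidHom.range_eq_map, Subgroup.range_subtype]
  rw [← hmap] at hx
  obtain ⟨y, hy, hyx⟩ := hx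
  have hxy : y = x := Subtype.ext hyx
  have h1 : Equiv.Perm.sign.comp f y = 1 :=
    Abelianization.commutator_subset_ker (Equiv.Perm.sign.comp f) hy
  rw [hxy] at h1
  simpa using h1
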